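/- Let X, U be finite sets and P : X × P(X) × U × P(U) → P(X) satisfy ‖P(x,μ₁,u,ν₁) − P(x,μ₂,u,ν₂)‖₁ ≤ L_P(‖μ₁−μ₂‖₁ + ‖ν₁−ν₂‖₁). Define Φ(μ,h)(x') = Σ_{x,u} P(x,μ,u,ν(μ,h))(x') μ(x) h(x)(u). Then ‖Φ(μ,h) − Φ(μ',h')‖₁ ≤ (2 L_P + 1)(‖μ−μ'‖₁ + max_x ‖h(x)−h'(x)‖₁). -/

import Mathlib

/-- A function is a probability mass function on a finite type. -/
def IsPmf {S : Type*} [Fintype S] (p : S → ℝ) : Prop :=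
  (∀ s, 0 ≤ p s) ∧ ∑ s, p s = 1

/-- Continuity of the aggregated mean-field transition
    Φ(μ,h)(x') = Σ_{x,u} P(x,μ,u,ν(μ,h))(x') μ(x) h(x)(u):
    ‖Φ(μ,h) − Φ(μ',h')‖₁ ≤ (2L_P + 1)(‖μ−μ'‖₁ + max_x ‖h(x)−h'(x)‖₁). -/
theorem continuity_of_Phi {X U : Type*} [Fintype X] [Fintype U] [Nonempty X]
    (P : X → (X → ℝ) → U → (U → ℝ) → X → ℝ) (LP : ℝ)
    (hker : ∀ x u (μ₁ : X → ℝ) (ν₁ : U → ℝ), IsPmf μ₁ → IsPmf ν₁ → IsPmf (P x μ₁ u ν₁))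
    (hlip : ∀ x u (μ₁ μ₂ : X → ℝ) (ν₁ ν₂ : U → ℝ), IsPmf μ₁ → IsPmf μ₂ → IsPmf ν₁ → IsPmf ν₂ →
      ∑ x', |P x μ₁ u ν₁ x' - P x μ₂ u ν₂ x'| ≤
        LP * ((∑ y, |μ₁ y - μ₂ y|) + ∑ v, |ν₁ v - ν₂ v|))
    (μ μ' : X → ℝ) (h h' : X → U → ℝ)
    (hμ : IsPmf μ) (hμ' : IsPmf μ') (hh : ∀ x, IsPmf (h x)) (hh' : ∀ x, IsPmf (h' x)) :
    ∑ x', |(∑ x, ∑ u, P x μ u (fun v => ∑ y, h y v * μ y) x' * (μ x * h x u)) -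
           (∑ x, ∑ u, P x μ' u (fun v => ∑ y, h' y v * μ' y) x' * (μ' x * h' x u))| ≤
      (2 * LP + 1) *
        ((∑ x, |μ x - μ' x|) +
          Finset.univ.sup' Finset.univ_nonempty (fun x => ∑ u, |h x u - h' x u|)) := by
  classical
  obtain ⟨hμ1, hμ2⟩ := hμ
  obtain ⟨hμ'1, hμ'2⟩ := hμ'
  haveI : Nonempty U := by
    by_contra hU
    rw [not_nonempty_iff] at hU
    have := (hh (Classical.arbitrary X)).2
    simp at this
  set ν : U → ℝ := fun v => ∑ y, h y v * μ y with hνdef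
  set ν' : U → ℝ := fun v => ∑ y, h' y v * μ' y with hν'def
  set M : ℝ := Finset.univ.sup' Finset.univ_nonempty (fun x => ∑ u, |h x u - h' x u|)
    with hMdef
  set A : ℝ := ∑ x, |μ x - μ' x| with hAdef
  have hMx : ∀ x : X, ∑ u, |h x u - h' x u| ≤ M := by
    intro x
    rw [hMdef]
    exact Finset.le_sup' (fun x => ∑ u, |h x u - h' x u|) (Finset.mem_univ x)
  have hM0 : 0 ≤ M := by
    refine le_trans ?_ (hMx (Classical.arbitrary X))
    exact Finset.sum_nonneg fun u _ => abs_nonneg _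
  have hA0 : 0 ≤ A := Finset.sum_nonneg fun x _ => abs_nonneg _
  have hνpmf : IsPmf ν := by
    constructor
    · intro v
      exact Finset.sum_nonneg fun y _ => mul_nonneg ((hh y).1 v) (hμ1 y)
    · rw [hνdef]
      rw [Finset.sum_comm]
      calc ∑ y, ∑ v, h y v * μ y = ∑ y, (∑ v, h y v) * μ y := by
            simp [Finset.sum_mul]
        _ = ∑ y, μ y := by
            refine Finset.sum_congr rfl fun y _ => ?_
            rw [(hh y).2, one_mul]
        _ = 1 := hμ2
  have hν'pmf : IsPmf ν' := by
    constructor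
    · intro v
      exact Finset.sum_nonneg fun y _ => mul_nonneg ((hh' y).1 v) (hμ'1 y)
    · rw [hν'def]
      rw [Finset.sum_comm]
      calc ∑ y, ∑ v, h' y v * μ' y = ∑ y, (∑ v, h' y v) * μ' y := by
            simp [Finset.sum_mul]
        _ = ∑ y, μ' y := by
            refine Finset.sum_congr rfl fun y _ => ?_
            rw [(hh' y).2, one_mul]
        _ = 1 := hμ'2
  -- key mixed bound
  have hmixterm : ∀ y : X, ∑ v, |h y v * μ y - h' y v * μ' y| ≤ μ y * M + |μ y - μ' y| := by
    intro y
    have step : ∀ v : U, |h y v * μ y - h' y v * μ' y| ≤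
        μ y * |h y v - h' y v| + h' y v * |μ y - μ' y| := by
      intro v
      have e : h y v * μ y - h' y v * μ' y =
          (h y v - h' y v) * μ y + h' y v * (μ y - μ' y) := by ring
      rw [e]
      refine (abs_add_le _ _).trans ?_
      rw [abs_mul, abs_mul, abs_of_nonneg (hμ1 y), abs_of_nonneg ((hh' y).1 v)]
      ring_nf
      exact le_refl _
    calc ∑ v, |h y v * μ y - h' y v * μ' y|
        ≤ ∑ v, (μ y * |h y v - h' y v| + h' y v * |μ y - μ' y|) :=
          Finset.sum_le_sum fun v _ => step v
      _ = μ y * (∑ v, |h y v - h' y v|) + (∑ v, h' y v) * |μ y - μ' y| := by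
          rw [Finset.sum_add_distrib, Finset.mul_sum, Finset.sum_mul]
      _ = μ y * (∑ v, |h y v - h' y v|) + |μ y - μ' y| := by
          rw [(hh' y).2, one_mul]
      _ ≤ μ y * M + |μ y - μ' y| := by
          have := mul_le_mul_of_nonneg_left (hMx y) (hμ1 y)
          linarith
  have hmix : ∑ y, ∑ v, |h y v * μ y - h' y v * μ' y| ≤ A + M := by
    calc ∑ y, ∑ v, |h y v * μ y - h' y v * μ' y|
        ≤ ∑ y, (μ y * M + |μ y - μ' y|) := Finset.sum_le_sum fun y _ => hmixterm y
      _ = (∑ y, μ y) * M + A := by rw [Finset.sum_add_distrib, Finset.sum_mul, hAdef]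
      _ = A + M := by rw [hμ2]; ring
  have hνdiff : ∑ v, |ν v - ν' v| ≤ A + M := by
    calc ∑ v, |ν v - ν' v|
        = ∑ v, |∑ y, (h y v * μ y - h' y v * μ' y)| := by
          simp [hνdef, hν'def, Finset.sum_sub_distrib]
      _ ≤ ∑ v, ∑ y, |h y v * μ y - h' y v * μ' y| :=
          Finset.sum_le_sum fun v _ => Finset.abs_sum_le_sum_abs _ _
      _ = ∑ y, ∑ v, |h y v * μ y - h' y v * μ' y| := Finset.sum_comm
      _ ≤ A + M := hmix
  -- case A + M = 0
  by_cases hD : A + M ≤ 0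
  · have hAz : A = 0 := le_antisymm (by linarith) hA0
    have hMz : M = 0 := le_antisymm (by linarith) hM0
    have hμeq : μ = μ' := by
      funext x
      have := (Finset.sum_eq_zero_iff_of_nonneg (fun x _ => abs_nonneg (μ x - μ' x))).1 hAz
        x (Finset.mem_univ x)
      have := abs_eq_zero.1 this
      linarith
    have hheq : h = h' := by
      funext x u
      have hx : ∑ u, |h x u - h' x u| = 0 :=
        le_antisymm (hMz ▸ hMx x) (Finset.sum_nonneg fun u _ => abs_nonneg _)
      have := (Finset.sum_eq_zero_iff_of_nonneg (fun u _ => abs_nonneg (h x u - h' x u))).1 hx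
        u (Finset.mem_univ u)
      have := abs_eq_zero.1 this
      linarith
    subst hμeq hheq
    simp only [hνdef, hν'def, sub_self, abs_zero, Finset.sum_const_zero]
    have : (0:ℝ) ≤ (2 * LP + 1) * (A + M) := by
      rw [hAz, hMz]; ring_nf; exact le_refl 0
    linarith
  -- case A + M > 0 : first derive 0 ≤ LP
  push_neg at hD
  have hLP : 0 ≤ LP := by
    rcases lt_or_ge 0 A with hA | hA
    · have h1 := hlip (Classical.arbitrary X) (Classical.arbitrary U) μ μ' ν ν
        ⟨hμ1, hμ2⟩ ⟨hμ'1, hμ'2⟩ hνpmf hνpmf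
      have h0 : (0:ℝ) ≤ ∑ x', |P (Classical.arbitrary X) μ (Classical.arbitrary U) ν x' -
          P (Classical.arbitrary X) μ' (Classical.arbitrary U) ν x'| :=
        Finset.sum_nonneg fun x' _ => abs_nonneg _
      have hz : ∑ v, |ν v - ν v| = 0 := by simp
      rw [hz] at h1
      have h3 : 0 ≤ LP * (A + 0) := le_trans h0 h1
      have h4 : 0 * A ≤ LP * A := by linarith
      exact le_of_mul_le_mul_right h4 hA
    · have hM : 0 < M := by linarith
      rw [hMdef] at hM
      obtain ⟨x₁, -, hx₁⟩ := (Finset.lt_sup'_iff _).1 hM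
      have h1 := hlip x₁ (Classical.arbitrary U) μ μ (h x₁) (h' x₁)
        ⟨hμ1, hμ2⟩ ⟨hμ1, hμ2⟩ (hh x₁) (hh' x₁)
      have h0 : (0:ℝ) ≤ ∑ x', |P x₁ μ (Classical.arbitrary U) (h x₁) x' -
          P x₁ μ (Classical.arbitrary U) (h' x₁) x'| :=
        Finset.sum_nonneg fun x' _ => abs_nonneg _
      have hz : ∑ y, |μ y - μ y| = 0 := by simp
      rw [hz, zero_add] at h1
      have h4 : 0 * (∑ u, |h x₁ u - h' x₁ u|) ≤ LP * (∑ u, |h x₁ u - h' x₁ u|) := by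
        linarith [le_trans h0 h1]
      exact le_of_mul_le_mul_right h4 hx₁
  -- per-(x,u) bound
  have key : ∀ x u, ∑ x', |P x μ u ν x' * (μ x * h x u) - P x μ' u ν' x' * (μ' x * h' x u)|
      ≤ (μ x * h x u) * (LP * (A + (A + M))) + |μ x * h x u - μ' x * h' x u| := by
    intro x u
    have hw : 0 ≤ μ x * h x u := mul_nonneg (hμ1 x) ((hh x).1 u)
    have h1 := hlip x u μ μ' ν ν' ⟨hμ1, hμ2⟩ ⟨hμ'1, hμ'2⟩ hνpmf hν'pmf
    have h2 : LP * ((∑ y, |μ y - μ' y|) + ∑ v, |ν v - ν' v|) ≤ LP * (A + (A + M)) := by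
      apply mul_le_mul_of_nonneg_left _ hLP
      rw [← hAdef]
      linarith [hνdiff]
    calc ∑ x', |P x μ u ν x' * (μ x * h x u) - P x μ' u ν' x' * (μ' x * h' x u)|
        ≤ ∑ x', (|P x μ u ν x' - P x μ' u ν' x'| * (μ x * h x u) +
            P x μ' u ν' x' * |μ x * h x u - μ' x * h' x u|) := by
          refine Finset.sum_le_sum fun x' _ => ?_
          have e : P x μ u ν x' * (μ x * h x u) - P x μ' u ν' x' * (μ' x * h' x u)
              = (P x μ u ν x' - P x μ' u ν' x') * (μ x * h x u) +
                P x μ' u ν' x' * (μ x * h x u - μ' x * h' x u) := by ring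
          rw [e]
          refine (abs_add_le _ _).trans ?_
          rw [abs_mul (P x μ u ν x' - P x μ' u ν' x'), abs_mul (P x μ' u ν' x'),
            abs_of_nonneg hw, abs_of_nonneg ((hker x u μ' ν' ⟨hμ'1, hμ'2⟩ hν'pmf).1 x')]
      _ = (∑ x', |P x μ u ν x' - P x μ' u ν' x'|) * (μ x * h x u) +
            (∑ x', P x μ' u ν' x') * |μ x * h x u - μ' x * h' x u| := by
          rw [Finset.sum_add_distrib, Finset.sum_mul, Finset.sum_mul]
      _ ≤ (LP * (A + (A + M))) * (μ x * h x u) + 1 * |μ x * h x u - μ' x * h' x u| := by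
          rw [(hker x u μ' ν' ⟨hμ'1, hμ'2⟩ hν'pmf).2]
          exact add_le_add (mul_le_mul_of_nonneg_right (h1.trans h2) hw) le_rfl
      _ = (μ x * h x u) * (LP * (A + (A + M))) + |μ x * h x u - μ' x * h' x u| := by ring
  -- total mass
  have hmass : ∑ x, ∑ u, μ x * h x u = 1 := by
    calc ∑ x, ∑ u, μ x * h x u = ∑ x, μ x * ∑ u, h x u := by
          simp [Finset.mul_sum]
      _ = ∑ x, μ x := by
          refine Finset.sum_congr rfl fun x _ => ?_
          rw [(hh x).2, mul_one]
      _ = 1 := hμ2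
  have hmix' : ∑ x, ∑ u, |μ x * h x u - μ' x * h' x u| ≤ A + M := by
    have : ∀ x u, |μ x * h x u - μ' x * h' x u| = |h x u * μ x - h' x u * μ' x| := by
      intro x u; rw [mul_comm (μ x), mul_comm (μ' x)]
    calc ∑ x, ∑ u, |μ x * h x u - μ' x * h' x u|
        = ∑ x, ∑ u, |h x u * μ x - h' x u * μ' x| := by
          exact Finset.sum_congr rfl fun x _ => Finset.sum_congr rfl fun u _ => this x u
      _ ≤ A + M := hmix
  calc ∑ x', |(∑ x, ∑ u, P x μ u ν x' * (μ x * h x u)) -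
          ∑ x, ∑ u, P x μ' u ν' x' * (μ' x * h' x u)|
      = ∑ x', |∑ x, ∑ u, (P x μ u ν x' * (μ x * h x u) -
          P x μ' u ν' x' * (μ' x * h' x u))| := by
        simp [Finset.sum_sub_distrib]
    _ ≤ ∑ x', ∑ x, ∑ u, |P x μ u ν x' * (μ x * h x u) -
          P x μ' u ν' x' * (μ' x * h' x u)| := by
        refine Finset.sum_le_sum fun x' _ => ?_
        refine (Finset.abs_sum_le_sum_abs _ _).trans ?_
        exact Finset.sum_le_sum fun x _ => Finset.abs_sum_le_sum_abs _ _
    _ = ∑ x, ∑ u, ∑ x', |P x μ u ν x' * (μ x * h x u) -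
          P x μ' u ν' x' * (μ' x * h' x u)| := by
        rw [Finset.sum_comm]
        exact Finset.sum_congr rfl fun x _ => Finset.sum_comm
    _ ≤ ∑ x, ∑ u, ((μ x * h x u) * (LP * (A + (A + M))) +
          |μ x * h x u - μ' x * h' x u|) :=
        Finset.sum_le_sum fun x _ => Finset.sum_le_sum fun u _ => key x u
    _ = (∑ x, ∑ u, μ x * h x u) * (LP * (A + (A + M))) +
          ∑ x, ∑ u, |μ x * h x u - μ' x * h' x u| := by
        simp [Finset.sum_add_distrib, Finset.sum_mul]
    _ ≤ 1 * (LP * (A + (A + M))) + (A + M) := by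
        rw [hmass]
        have : 0 ≤ LP * (A + (A + M)) := mul_nonneg hLP (by linarith)
        linarith [hmix']
    _ ≤ (2 * LP + 1) * (A + M) := by nlinarith [mul_nonneg hLP hM0, mul_nonneg hLP hA0]
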